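/- The condition NA₁(𝒫) holds if and only if NA₁(P) holds for every P ∈ 𝒫, where S is a right-continuous adapted process whose paths are P-a.s. continuous for each P ∈ 𝒫. -/

import Mathlib

open scoped ENNReal NNReal
open MeasureTheory Set

variable {Ω : Type*} {m0 : MeasurableSpace Ω}

/-- The right-continuous filtration `F_{t+} = ⋂_{s>t} F_s`. -/
def plusFilt (F : Filtration ℝ≥0 m0) (t : ℝ≥0) : MeasurableSpace Ω :=
  ⨅ s ∈ Set.Ioi t, (F s : MeasurableSpace Ω)

/-- `τ` is a stopping time of the family of σ-fields `G`. -/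
def IsStopTime (G : ℝ≥0 → MeasurableSpace Ω) (τ : Ω → ℝ≥0∞) : Prop :=
  ∀ t : ℝ≥0, MeasurableSet[G t] {ω | τ ω ≤ (t : ℝ≥0∞)}

/-- Membership in the σ-field `F_{τ+}`. -/
def MemStopSigmaPlus (F : Filtration ℝ≥0 m0) (τ : Ω → ℝ≥0∞) (A : Set Ω) : Prop :=
  ∀ t : ℝ≥0, MeasurableSet[plusFilt F t] (A ∩ {ω | τ ω ≤ (t : ℝ≥0∞)})

/-- A simple predictable strategy `H = Σ_{i=1}^n h_i 1_{(τ_{i-1},τ_i]}` with `h_i`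
`F_{τ_{i-1}+}`-measurable and `(τ_i)` a nondecreasing sequence of `(F_{t+})`-stopping
times with `τ_0 = 0`. -/
structure SimpleStrategy (F : Filtration ℝ≥0 m0) (d : ℕ) where
  n : ℕ
  τ : ℕ → Ω → ℝ≥0∞
  h : ℕ → Ω → Fin d → ℝ
  tau_zero : ∀ ω, τ 0 ω = 0
  tau_mono : ∀ ω, Monotone fun i => τ i ω
  tau_stop : ∀ i, IsStopTime (plusFilt F) (τ i)
  h_meas : ∀ i, ∀ B : Set (Fin d → ℝ), MeasurableSet B →
    MemStopSigmaPlus F (τ i) {ω | h i ω ∈ B}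

/-- The wealth process `X^{x,H} = x + H • S`. -/
noncomputable def wealth {F : Filtration ℝ≥0 m0} {d : ℕ} (S : ℝ≥0 → Ω → Fin d → ℝ)
    (x : ℝ) (H : SimpleStrategy F d) (t : ℝ≥0) (ω : Ω) : ℝ :=
  x + ∑ i ∈ Finset.range H.n, ∑ j : Fin d, H.h i ω j *
    (S ((min (H.τ (i + 1) ω) (t : ℝ≥0∞)).toNNReal) ω j -
      S ((min (H.τ i ω) (t : ℝ≥0∞)).toNNReal) ω j)

/-- `H ∈ H^{simp}(x)` superhedges `f` at time `T` simultaneously under all `P ∈ Ps`. -/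
def Superhedges {F : Filtration ℝ≥0 m0} {d : ℕ} (S : ℝ≥0 → Ω → Fin d → ℝ)
    (Ps : Set (Measure Ω)) (x : ℝ) (H : SimpleStrategy F d) (T : ℝ≥0) (f : Ω → ℝ) : Prop :=
  (∀ P ∈ Ps, ∀ᵐ ω ∂P, ∀ t : ℝ≥0, 0 ≤ wealth S x H t ω) ∧
  (∀ P ∈ Ps, ∀ᵐ ω ∂P, f ω ≤ wealth S x H T ω)

/-- `NA₁(Ps)`: if a nonnegative `F_T`-measurable claim `f` can be superhedged with simple
strategies at arbitrarily small initial capital (i.e. `v^{simp}(T,f) = 0`), then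
`f = 0` `Ps`-q.s. -/
def NA1 {d : ℕ} (F : Filtration ℝ≥0 m0) (S : ℝ≥0 → Ω → Fin d → ℝ)
    (Ps : Set (Measure Ω)) : Prop :=
  ∀ T : ℝ≥0, ∀ f : Ω → ℝ, StronglyMeasurable[F T] f → (∀ ω, 0 ≤ f ω) →
    (∀ ε : ℝ, 0 < ε → ∃ x : ℝ, 0 ≤ x ∧ x < ε ∧
      ∃ H : SimpleStrategy F d, Superhedges S Ps x H T f) →
    ∀ P ∈ Ps, P {ω | f ω ≠ 0} = 0

section AuxProofs

open Filter Topology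

section PF
variable (F : Filtration ℝ≥0 m0)

lemma plusFilt_le {t s : ℝ≥0} (h : t < s) : plusFilt F t ≤ F s :=
  iInf₂_le s h

lemma F_le_plusFilt {v t : ℝ≥0} (h : v ≤ t) : (F v : MeasurableSpace Ω) ≤ plusFilt F t :=
  le_iInf₂ fun s hs => F.mono (h.trans hs.le)

lemma plusFilt_mono {q t : ℝ≥0} (h : q ≤ t) : plusFilt F q ≤ plusFilt F t :=
  le_iInf₂ fun s hs => iInf₂_le s (lt_of_le_of_lt h hs)

lemma measurableSet_plusFilt {t : ℝ≥0} {A : Set Ω}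
    (h : ∀ s : ℝ≥0, t < s → MeasurableSet[F s] A) : MeasurableSet[plusFilt F t] A := by
  rw [plusFilt, MeasurableSpace.measurableSet_iInf]
  intro s
  rw [MeasurableSpace.measurableSet_iInf]
  intro hs
  exact h s hs

end PF

lemma exists_rat_btwn_ennreal {a b : ℝ≥0∞} (hab : a < b) (hb : b ≠ ⊤) :
    ∃ p : ℚ, a < (Real.toNNReal p : ℝ≥0∞) ∧ (Real.toNNReal p : ℝ≥0∞) < b := by
  have ha : a ≠ ⊤ := hab.ne_top
  have h := (ENNReal.toReal_lt_toReal ha hb).2 hab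
  obtain ⟨p, hp1, hp2⟩ := exists_rat_btwn h
  have hco : ∀ q : ℝ, (Real.toNNReal q : ℝ≥0∞) = ENNReal.ofReal q := fun _ => rfl
  refine ⟨p, ?_, ?_⟩
  · rw [hco, ← ENNReal.ofReal_toReal ha]
    exact (ENNReal.ofReal_lt_ofReal_iff_of_nonneg ENNReal.toReal_nonneg).2 hp1
  · rw [hco, ← ENNReal.ofReal_toReal hb]
    exact (ENNReal.ofReal_lt_ofReal_iff_of_nonneg
      (le_trans ENNReal.toReal_nonneg hp1.le)).2 hp2

lemma exists_rat_btwn_nnreal {a b : ℝ≥0} (hab : a < b) :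
    ∃ p : ℚ, a < Real.toNNReal p ∧ Real.toNNReal p < b := by
  obtain ⟨p, h1, h2⟩ := exists_rat_btwn_ennreal (ENNReal.coe_lt_coe.2 hab) ENNReal.coe_ne_top
  exact ⟨p, ENNReal.coe_lt_coe.1 h1, ENNReal.coe_lt_coe.1 h2⟩

/-- First time the path `t ↦ X t ω` goes (strictly) below `0`. -/
noncomputable def hitTime (X : ℝ≥0 → Ω → ℝ) (ω : Ω) : ℝ≥0∞ :=
  ⨅ (t : ℝ≥0) (_ : X t ω < 0), (t : ℝ≥0∞)

lemma hitTime_le {X : ℝ≥0 → Ω → ℝ} {ω : Ω} {t : ℝ≥0} (h : X t ω < 0) :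
    hitTime X ω ≤ (t : ℝ≥0∞) :=
  iInf₂_le t h

lemma hitTime_eq_top {X : ℝ≥0 → Ω → ℝ} {ω : Ω} (h : ∀ t, 0 ≤ X t ω) :
    hitTime X ω = ⊤ := by
  rw [hitTime, iInf_eq_top]
  exact fun t => iInf_neg (not_lt.2 (h t))

lemma hitTime_lt_iff {X : ℝ≥0 → Ω → ℝ}
    (hX : ∀ ω (t : ℝ≥0), ContinuousWithinAt (fun s => X s ω) (Ici t) t)
    {ω : Ω} {u : ℝ≥0∞} :
    hitTime X ω < u ↔
      ∃ p : ℚ, (Real.toNNReal p : ℝ≥0∞) < u ∧ X (Real.toNNReal p) ω < 0 := by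
  constructor
  · intro h
    rw [hitTime] at h
    obtain ⟨t, ht⟩ := iInf_lt_iff.1 h
    obtain ⟨hneg, htu⟩ := iInf_lt_iff.1 ht
    obtain ⟨u', htu', hu'u⟩ : ∃ u' : ℝ≥0, t < u' ∧ (u' : ℝ≥0∞) ≤ u := by
      rcases eq_or_ne u ⊤ with rfl | hu
      · exact ⟨t + 1, lt_add_one t, le_top⟩
      · refine ⟨u.toNNReal, ?_, ?_⟩
        · rw [← ENNReal.coe_lt_coe, ENNReal.coe_toNNReal hu]; exact htu
        · rw [ENNReal.coe_toNNReal hu]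
    have hV : ∀ᶠ v in 𝓝[≥] t, X v ω < 0 := (hX ω t).eventually_lt_const hneg
    have hW : ∀ᶠ v in 𝓝[≥] t, X v ω < 0 ∧ v ∈ Ico t u' :=
      hV.and (Filter.eventually_of_mem (Ico_mem_nhdsGE htu') fun v hv => hv)
    obtain ⟨O, hOopen, htO, hOsub⟩ := mem_nhdsWithin.1 hW
    obtain ⟨w, htw, hIcow⟩ := exists_Ico_subset_of_mem_nhds (hOopen.mem_nhds htO)
      ⟨t + 1, lt_add_one t⟩
    obtain ⟨p, hp1, hp2⟩ := exists_rat_btwn_nnreal (lt_min htw htu')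
    have hmem : (Real.toNNReal p) ∈ O ∩ Ici t :=
      ⟨hIcow ⟨hp1.le, hp2.trans_le (min_le_left _ _)⟩, hp1.le⟩
    have := hOsub hmem
    exact ⟨p, lt_of_lt_of_le (ENNReal.coe_lt_coe.2 this.2.2) hu'u, this.1⟩
  · rintro ⟨p, hpu, hneg⟩
    exact lt_of_le_of_lt (hitTime_le hneg) hpu

lemma hitTime_isStopTime (F : Filtration ℝ≥0 m0) {X : ℝ≥0 → Ω → ℝ}
    (hXrc : ∀ ω (t : ℝ≥0), ContinuousWithinAt (fun s => X s ω) (Ici t) t)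
    (hXm : ∀ q : ℝ≥0, Measurable[plusFilt F q] (fun ω => X q ω)) :
    IsStopTime (plusFilt F) (hitTime X) := by
  intro t
  apply measurableSet_plusFilt
  intro s hs
  have hset : {ω | hitTime X ω ≤ (t : ℝ≥0∞)} =
      ⋂ (r : ℚ), ⋂ (_ : (t : ℝ≥0∞) < (Real.toNNReal r : ℝ≥0∞) ∧
        (Real.toNNReal r : ℝ≥0∞) < (s : ℝ≥0∞)),
        {ω | hitTime X ω < (Real.toNNReal r : ℝ≥0∞)} := by
    ext ω
    simp only [mem_iInter, mem_setOf_eq]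
    constructor
    · intro h r hr
      exact lt_of_le_of_lt h hr.1
    · intro h
      by_contra hσ
      push_neg at hσ
      obtain ⟨r, hr1, hr2⟩ := exists_rat_btwn_ennreal
        (lt_min hσ (ENNReal.coe_lt_coe.2 hs)) (ne_top_of_le_ne_top ENNReal.coe_ne_top
          (min_le_right _ _))
      have := h r ⟨hr1, lt_of_lt_of_le hr2 (min_le_right _ _)⟩
      exact absurd (lt_of_lt_of_le hr2 (min_le_left _ _)) (not_lt.2 this.le)
  rw [hset]
  refine MeasurableSet.iInter fun r => MeasurableSet.iInter fun hr => ?_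
  have hset2 : {ω | hitTime X ω < (Real.toNNReal r : ℝ≥0∞)} =
      ⋃ (p : ℚ), ⋃ (_ : (Real.toNNReal p : ℝ≥0∞) < (Real.toNNReal r : ℝ≥0∞)),
        {ω | X (Real.toNNReal p) ω < 0} := by
    ext ω
    simp only [mem_iUnion, mem_setOf_eq]
    rw [hitTime_lt_iff hXrc]
    constructor
    · rintro ⟨p, h1, h2⟩; exact ⟨p, h1, h2⟩
    · rintro ⟨p, h1, h2⟩; exact ⟨p, h1, h2⟩
  rw [hset2]
  refine MeasurableSet.iUnion fun p => MeasurableSet.iUnion fun hp => ?_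
  have hps : Real.toNNReal p < s := by
    have := lt_trans hp hr.2
    exact_mod_cast this
  exact plusFilt_le F hps _ ((hXm (Real.toNNReal p)) measurableSet_Iio)

/-! ### Continuity of the wealth path -/

lemma minTau_eq {a : ℝ≥0∞} (ha : a ≠ ⊤) (s : ℝ≥0) :
    (min a (s : ℝ≥0∞)).toNNReal = min a.toNNReal s := by
  rcases le_total a ((s : ℝ≥0) : ℝ≥0∞) with h | h
  · rw [min_eq_left h, min_eq_left]
    rw [← ENNReal.coe_le_coe, ENNReal.coe_toNNReal ha]; exact h
  · rw [min_eq_right h, ENNReal.toNNReal_coe, min_eq_right]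
    rw [← ENNReal.coe_le_coe, ENNReal.coe_toNNReal ha]; exact h

lemma minTau_continuous (a : ℝ≥0∞) :
    Continuous fun s : ℝ≥0 => (min a (s : ℝ≥0∞)).toNNReal := by
  rcases eq_or_ne a ⊤ with rfl | ha
  · have : (fun s : ℝ≥0 => (min ⊤ (s : ℝ≥0∞)).toNNReal) = fun s => s := by
      funext s; rw [min_eq_right le_top, ENNReal.toNNReal_coe]
    rw [this]; exact continuous_id
  · have : (fun s : ℝ≥0 => (min a (s : ℝ≥0∞)).toNNReal) = fun s => min a.toNNReal s := by
      funext s; exact minTau_eq ha s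
    rw [this]; exact continuous_const.min continuous_id

lemma minTau_monotone (a : ℝ≥0∞) :
    Monotone fun s : ℝ≥0 => (min a (s : ℝ≥0∞)).toNNReal := fun u v huv =>
  ENNReal.toNNReal_mono (ne_top_of_le_ne_top ENNReal.coe_ne_top (min_le_right _ _))
    (min_le_min le_rfl (ENNReal.coe_le_coe.2 huv))

variable {F : Filtration ℝ≥0 m0} {d : ℕ}

lemma wealth_rightCont (S : ℝ≥0 → Ω → Fin d → ℝ)
    (hrc : ∀ ω (t : ℝ≥0), ContinuousWithinAt (fun s => S s ω) (Ici t) t)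
    (x : ℝ) (H : SimpleStrategy F d) (ω : Ω) (t : ℝ≥0) :
    ContinuousWithinAt (fun s => wealth S x H s ω) (Ici t) t := by
  have hm : ∀ a : ℝ≥0∞, ContinuousWithinAt
      (fun s : ℝ≥0 => S ((min a (s : ℝ≥0∞)).toNNReal) ω) (Ici t) t :=
    fun a => (hrc ω _).comp ((minTau_continuous a).continuousAt.continuousWithinAt)
      (fun s hs => minTau_monotone a hs)
  simp only [wealth]
  apply ContinuousWithinAt.add continuousWithinAt_const
  apply tendsto_finset_sum
  intro i _
  apply tendsto_finset_sum
  intro j _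
  exact Filter.Tendsto.const_mul _
    ((((continuous_apply j).tendsto _).comp (hm (H.τ (i + 1) ω))).sub
      (((continuous_apply j).tendsto _).comp (hm (H.τ i ω))))

lemma wealth_continuous (S : ℝ≥0 → Ω → Fin d → ℝ)
    (x : ℝ) (H : SimpleStrategy F d) {ω : Ω} (hω : Continuous fun v : ℝ≥0 => S v ω) :
    Continuous fun v : ℝ≥0 => wealth S x H v ω := by
  simp only [wealth]
  apply continuous_const.add
  apply continuous_finset_sum
  intro i _
  apply continuous_finset_sum
  intro j _
  exact continuous_const.mul
    (((continuous_apply j).comp (hω.comp (minTau_continuous _))).sub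
      ((continuous_apply j).comp (hω.comp (minTau_continuous _))))

lemma wealth_zero (S : ℝ≥0 → Ω → Fin d → ℝ) (x : ℝ) (H : SimpleStrategy F d) (ω : Ω) :
    wealth S x H 0 ω = x := by
  have h0 : ∀ a : ℝ≥0∞, min a (((0 : ℝ≥0)) : ℝ≥0∞) = 0 := fun a => by
    rw [ENNReal.coe_zero]; exact min_eq_right zero_le
  simp [wealth, h0]

lemma wealth_nonneg_of_le_hit (S : ℝ≥0 → Ω → Fin d → ℝ) {x : ℝ} (hx : 0 ≤ x)
    {H : SimpleStrategy F d} {ω : Ω}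
    (hc : Continuous fun v : ℝ≥0 => wealth S x H v ω) {w : ℝ≥0}
    (hw : (w : ℝ≥0∞) ≤ hitTime (fun t ω => wealth S x H t ω) ω) :
    0 ≤ wealth S x H w ω := by
  by_contra hneg
  push_neg at hneg
  rcases eq_or_lt_of_le (show (0 : ℝ≥0) ≤ w from zero_le) with rfl | hw0
  · rw [wealth_zero] at hneg; exact absurd hx (not_le.2 hneg)
  · have hO : (fun v : ℝ≥0 => wealth S x H v ω) ⁻¹' (Iio 0) ∈ 𝓝 w :=
      (isOpen_Iio.preimage hc).mem_nhds hneg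
    haveI hnb : NeBot (𝓝[<] w) := nhdsWithin_Iio_self_neBot' ⟨0, hw0⟩
    have hmem : ((fun v : ℝ≥0 => wealth S x H v ω) ⁻¹' (Iio 0) ∩ Iio w) ∈ 𝓝[<] w :=
      Filter.inter_mem (mem_nhdsWithin_of_mem_nhds hO) self_mem_nhdsWithin
    obtain ⟨s, hs1, hs2⟩ := Filter.nonempty_of_mem hmem
    have h1 : hitTime (fun t ω => wealth S x H t ω) ω ≤ (s : ℝ≥0∞) := hitTime_le hs1
    exact absurd (lt_of_le_of_lt (hw.trans h1) (ENNReal.coe_lt_coe.2 hs2)) (lt_irrefl _)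

/-! ### Stopping a simple strategy -/

lemma stop_aux_union (F : Filtration ℝ≥0 m0) {τ κ : Ω → ℝ≥0∞}
    (hτ : IsStopTime (plusFilt F) τ) (hκ : IsStopTime (plusFilt F) κ) (t : ℝ≥0) :
    MeasurableSet[plusFilt F t]
      (⋃ (p : ℚ) (_ : Real.toNNReal p < t),
        ({ω | τ ω ≤ (Real.toNNReal p : ℝ≥0∞)} ∩
          {ω | κ ω ≤ (Real.toNNReal p : ℝ≥0∞)}ᶜ)) :=
  MeasurableSet.iUnion fun p => MeasurableSet.iUnion fun hp =>
    (plusFilt_mono F hp.le) _ ((hτ _).inter (hκ _).compl)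

lemma stop_set_L1 {τ κ : Ω → ℝ≥0∞} (hτκmono : True) (t : ℝ≥0) :
    {ω | τ ω < κ ω} ∩ {ω | τ ω ≤ (t : ℝ≥0∞)} =
      ({ω | τ ω ≤ (t : ℝ≥0∞)} ∩ {ω | κ ω ≤ (t : ℝ≥0∞)}ᶜ) ∪
      (⋃ (p : ℚ) (_ : Real.toNNReal p < t),
        ({ω | τ ω ≤ (Real.toNNReal p : ℝ≥0∞)} ∩
          {ω | κ ω ≤ (Real.toNNReal p : ℝ≥0∞)}ᶜ)) := by
  ext ω
  simp only [mem_inter_iff, mem_union, mem_iUnion, mem_compl_iff, mem_setOf_eq, not_le]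
  constructor
  · rintro ⟨hτκ, hτt⟩
    by_cases hκt : κ ω ≤ (t : ℝ≥0∞)
    · obtain ⟨p, hp1, hp2⟩ := exists_rat_btwn_ennreal hτκ
        (ne_top_of_le_ne_top ENNReal.coe_ne_top hκt)
      have hpt : Real.toNNReal p < t := by
        have := lt_of_lt_of_le hp2 hκt
        exact_mod_cast this
      exact Or.inr ⟨p, hpt, hp1.le, hp2⟩
    · exact Or.inl ⟨hτt, not_le.1 hκt⟩
  · rintro (⟨h1, h2⟩ | ⟨p, hpt, h1, h2⟩)
    · exact ⟨lt_of_le_of_lt h1 h2, h1⟩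
    · exact ⟨lt_of_le_of_lt h1 h2, h1.trans (ENNReal.coe_le_coe.2 hpt.le)⟩

lemma stop_set_L2 {τ κ : Ω → ℝ≥0∞} (t : ℝ≥0) :
    {ω | τ ω < κ ω} ∩ {ω | κ ω ≤ (t : ℝ≥0∞)} =
      (⋃ (p : ℚ) (_ : Real.toNNReal p < t),
        ({ω | τ ω ≤ (Real.toNNReal p : ℝ≥0∞)} ∩
          {ω | κ ω ≤ (Real.toNNReal p : ℝ≥0∞)}ᶜ)) ∩ {ω | κ ω ≤ (t : ℝ≥0∞)} := by
  ext ω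
  simp only [mem_inter_iff, mem_iUnion, mem_compl_iff, mem_setOf_eq, not_le]
  constructor
  · rintro ⟨hτκ, hκt⟩
    obtain ⟨p, hp1, hp2⟩ := exists_rat_btwn_ennreal hτκ
      (ne_top_of_le_ne_top ENNReal.coe_ne_top hκt)
    have hpt : Real.toNNReal p < t := by
      have := lt_of_lt_of_le hp2 hκt
      exact_mod_cast this
    exact ⟨⟨p, hpt, hp1.le, hp2⟩, hκt⟩
  · rintro ⟨⟨p, hpt, h1, h2⟩, hκt⟩
    exact ⟨lt_of_le_of_lt h1 h2, hκt⟩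

/-- Stopping a simple strategy at a stopping time `κ`. -/
noncomputable def stopStrat (H : SimpleStrategy F d) (κ : Ω → ℝ≥0∞)
    (hκ : IsStopTime (plusFilt F) κ) : SimpleStrategy F d where
  n := H.n
  τ := fun i ω => min (H.τ i ω) (κ ω)
  h := fun i ω => if H.τ i ω < κ ω then H.h i ω else 0
  tau_zero := fun ω => by show min (H.τ 0 ω) (κ ω) = 0; rw [H.tau_zero]; exact min_eq_left zero_le
  tau_mono := fun ω i k hik => min_le_min (H.tau_mono ω hik) le_rfl
  tau_stop := fun i t => by
    have hset : {ω | min (H.τ i ω) (κ ω) ≤ (t : ℝ≥0∞)} =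
        {ω | H.τ i ω ≤ (t : ℝ≥0∞)} ∪ {ω | κ ω ≤ (t : ℝ≥0∞)} := by
      ext ω; simp [min_le_iff]
    rw [hset]
    exact (H.tau_stop i t).union (hκ t)
  h_meas := fun i B hB t => by
    classical
    have hS1m : MeasurableSet[plusFilt F t]
        (({ω | H.h i ω ∈ B} ∩ {ω | H.τ i ω ≤ (t : ℝ≥0∞)}) ∩
          ({ω | H.τ i ω < κ ω} ∩ {ω | H.τ i ω ≤ (t : ℝ≥0∞)})) := by
      refine (H.h_meas i B hB t).inter ?_
      rw [stop_set_L1 trivial t]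
      exact ((H.tau_stop i t).inter (hκ t).compl).union
        (stop_aux_union F (H.tau_stop i) hκ t)
    have hS2m : MeasurableSet[plusFilt F t]
        ({ω | κ ω ≤ (t : ℝ≥0∞)} \ ({ω | H.τ i ω < κ ω} ∩ {ω | κ ω ≤ (t : ℝ≥0∞)})) := by
      refine (hκ t).diff ?_
      rw [stop_set_L2 t]
      exact (stop_aux_union F (H.tau_stop i) hκ t).inter (hκ t)
    by_cases h0 : (0 : Fin d → ℝ) ∈ B
    · have hset : {ω | (if H.τ i ω < κ ω then H.h i ω else 0) ∈ B} ∩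
          {ω | min (H.τ i ω) (κ ω) ≤ (t : ℝ≥0∞)} =
          (({ω | H.h i ω ∈ B} ∩ {ω | H.τ i ω ≤ (t : ℝ≥0∞)}) ∩
            ({ω | H.τ i ω < κ ω} ∩ {ω | H.τ i ω ≤ (t : ℝ≥0∞)})) ∪
          ({ω | κ ω ≤ (t : ℝ≥0∞)} \
            ({ω | H.τ i ω < κ ω} ∩ {ω | κ ω ≤ (t : ℝ≥0∞)})) := by
        ext ω
        by_cases hc : H.τ i ω < κ ω
        · simp only [mem_inter_iff, mem_union, mem_diff, mem_setOf_eq, if_pos hc,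
            min_eq_left hc.le]
          tauto
        · simp only [mem_inter_iff, mem_union, mem_diff, mem_setOf_eq, if_neg hc,
            min_eq_right (not_lt.1 hc), h0]
          tauto
      rw [hset]
      exact hS1m.union hS2m
    · have hset : {ω | (if H.τ i ω < κ ω then H.h i ω else 0) ∈ B} ∩
          {ω | min (H.τ i ω) (κ ω) ≤ (t : ℝ≥0∞)} =
          (({ω | H.h i ω ∈ B} ∩ {ω | H.τ i ω ≤ (t : ℝ≥0∞)}) ∩
            ({ω | H.τ i ω < κ ω} ∩ {ω | H.τ i ω ≤ (t : ℝ≥0∞)})) := by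
        ext ω
        by_cases hc : H.τ i ω < κ ω
        · simp only [mem_inter_iff, mem_setOf_eq, if_pos hc, min_eq_left hc.le]
          tauto
        · simp only [mem_inter_iff, mem_setOf_eq, if_neg hc,
            min_eq_right (not_lt.1 hc), h0]
          tauto
      rw [hset]
      exact hS1m

@[simp] lemma stopStrat_n (H : SimpleStrategy F d) (κ) (hκ) :
    (stopStrat H κ hκ).n = H.n := rfl
@[simp] lemma stopStrat_tau (H : SimpleStrategy F d) (κ) (hκ) (i : ℕ) (ω : Ω) :
    (stopStrat H κ hκ).τ i ω = min (H.τ i ω) (κ ω) := rfl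
@[simp] lemma stopStrat_h (H : SimpleStrategy F d) (κ) (hκ) (i : ℕ) (ω : Ω) :
    (stopStrat H κ hκ).h i ω = if H.τ i ω < κ ω then H.h i ω else 0 := rfl

lemma wealth_stopStrat (S : ℝ≥0 → Ω → Fin d → ℝ) (x : ℝ) (H : SimpleStrategy F d)
    (κ : Ω → ℝ≥0∞) (hκ : IsStopTime (plusFilt F) κ) (t : ℝ≥0) (ω : Ω) :
    wealth S x (stopStrat H κ hκ) t ω
      = wealth S x H ((min (κ ω) (t : ℝ≥0∞)).toNNReal) ω := by
  have hne : min (κ ω) (t : ℝ≥0∞) ≠ ⊤ :=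
    ne_top_of_le_ne_top ENNReal.coe_ne_top (min_le_right _ _)
  have hco : (((min (κ ω) (t : ℝ≥0∞)).toNNReal : ℝ≥0) : ℝ≥0∞) = min (κ ω) (t : ℝ≥0∞) :=
    ENNReal.coe_toNNReal hne
  simp only [wealth, stopStrat_n, stopStrat_tau, stopStrat_h]
  congr 1
  apply Finset.sum_congr rfl
  intro i _
  have harg : ∀ k : ℕ, (min (min (H.τ k ω) (κ ω)) ((t : ℝ≥0) : ℝ≥0∞)).toNNReal
      = (min (H.τ k ω)
          (((min (κ ω) ((t : ℝ≥0) : ℝ≥0∞)).toNNReal : ℝ≥0) : ℝ≥0∞)).toNNReal := by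
    intro k; rw [hco, min_assoc]
  by_cases hc : H.τ i ω < κ ω
  · simp only [if_pos hc]
    apply Finset.sum_congr rfl
    intro j _
    rw [harg (i + 1), harg i]
  · have hκτ : κ ω ≤ H.τ i ω := not_lt.1 hc
    have hκτ' : κ ω ≤ H.τ (i + 1) ω := hκτ.trans (H.tau_mono ω (Nat.le_succ i))
    have h3 : ∀ k : ℕ, κ ω ≤ H.τ k ω →
        min (H.τ k ω) (((min (κ ω) ((t : ℝ≥0) : ℝ≥0∞)).toNNReal : ℝ≥0) : ℝ≥0∞)
          = min (κ ω) ((t : ℝ≥0) : ℝ≥0∞) := by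
      intro k hk; rw [hco, min_eq_right ((min_le_left _ _).trans hk)]
    simp only [if_neg hc, Pi.zero_apply, zero_mul, Finset.sum_const_zero,
      h3 i hκτ, h3 (i + 1) hκτ', sub_self, mul_zero]

/-! ### Measurability of the wealth at a fixed time -/

lemma measurable_nat_piece {G : MeasurableSpace Ω} {β : Type*} [MeasurableSpace β]
    {jf : Ω → ℕ} {g : ℕ → Ω → β} (hj : Measurable[G] jf)
    (hg : ∀ k, Measurable[G] (g k)) :
    Measurable[G] fun ω => g (jf ω) ω := by
  intro B hB
  have hset : (fun ω => g (jf ω) ω) ⁻¹' B = ⋃ k, (jf ⁻¹' {k}) ∩ ((g k) ⁻¹' B) := by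
    ext ω
    simp only [mem_preimage, mem_iUnion, mem_inter_iff, mem_singleton_iff]
    constructor
    · intro h; exact ⟨jf ω, rfl, h⟩
    · rintro ⟨k, hk, h⟩; rw [hk]; exact h
  rw [hset]
  exact MeasurableSet.iUnion fun k => (hj (measurableSet_singleton k)).inter (hg k hB)

end AuxProofs

section FreshAlpha

open Filter Topology MeasureTheory Set

variable {α : Type*} [G : MeasurableSpace α]

lemma measurable_trunc_min {τ : α → ℝ≥0∞} (q : ℝ≥0)
    (h : ∀ c : ℝ≥0, c < q → MeasurableSet {ω | τ ω ≤ (c : ℝ≥0∞)}) :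
    Measurable fun ω => (min (τ ω) ((q : ℝ≥0) : ℝ≥0∞)).toNNReal := by
  apply measurable_of_Iic
  intro c
  by_cases hc : c < q
  · have hset : (fun ω => (min (τ ω) ((q : ℝ≥0) : ℝ≥0∞)).toNNReal) ⁻¹' Iic c
        = {ω | τ ω ≤ (c : ℝ≥0∞)} := by
      ext ω
      simp only [mem_preimage, mem_Iic, mem_setOf_eq]
      rw [← ENNReal.coe_le_coe,
        ENNReal.coe_toNNReal (ne_top_of_le_ne_top ENNReal.coe_ne_top (min_le_right _ _)),
        min_le_iff]
      constructor
      · rintro (h' | h')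
        · exact h'
        · exact absurd (ENNReal.coe_le_coe.1 h') (not_le.2 hc)
      · exact Or.inl
    rw [hset]
    exact h c hc
  · have hset : (fun ω => (min (τ ω) ((q : ℝ≥0) : ℝ≥0∞)).toNNReal) ⁻¹' Iic c = univ := by
      apply eq_univ_of_forall
      intro ω
      simp only [mem_preimage, mem_Iic]
      have h1 : (min (τ ω) ((q : ℝ≥0) : ℝ≥0∞)).toNNReal ≤ q := by
        have := ENNReal.toNNReal_mono ENNReal.coe_ne_top
          (min_le_right (τ ω) ((q : ℝ≥0) : ℝ≥0∞))
        rwa [ENNReal.toNNReal_coe] at this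
      exact h1.trans (not_lt.1 hc)
    rw [hset]
    exact MeasurableSet.univ

lemma measurable_comp_stopped {d : ℕ} (S : ℝ≥0 → α → Fin d → ℝ)
    (hrc : ∀ ω (t : ℝ≥0), ContinuousWithinAt (fun s => S s ω) (Ici t) t)
    (q : ℝ≥0) (hS : ∀ v : ℝ≥0, v ≤ q → Measurable (S v))
    {ρ : α → ℝ≥0} (hρ : Measurable ρ) (hρq : ∀ ω, ρ ω ≤ q) :
    Measurable fun ω => S (ρ ω) ω := by
  have hAm : ∀ k : ℕ, Measurable fun ω =>
      S (min q ((⌈(ρ ω : ℝ≥0) * 2 ^ k⌉₊ : ℝ≥0) / 2 ^ k)) ω := by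
    intro k
    exact measurable_nat_piece (jf := fun ω => ⌈(ρ ω : ℝ≥0) * 2 ^ k⌉₊)
      (g := fun j ω => S (min q ((j : ℝ≥0) / 2 ^ k)) ω)
      ((hρ.mul_const _).nat_ceil)
      (fun j => hS _ (min_le_left _ _))
  have hlim : ∀ ω, Tendsto
      (fun k : ℕ => S (min q ((⌈(ρ ω : ℝ≥0) * 2 ^ k⌉₊ : ℝ≥0) / 2 ^ k)) ω)
      atTop (𝓝 (S (ρ ω) ω)) := by
    intro ω
    have h2k : ∀ k : ℕ, ((2 : ℝ≥0) ^ k) ≠ 0 := fun k => pow_ne_zero k two_ne_zero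
    have hb1 : ∀ k : ℕ, ρ ω ≤ min q ((⌈(ρ ω : ℝ≥0) * 2 ^ k⌉₊ : ℝ≥0) / 2 ^ k) := by
      intro k
      refine le_min (hρq ω) ?_
      rw [le_div_iff₀ (pos_iff_ne_zero.2 (h2k k))]
      exact Nat.le_ceil _
    have hb2 : ∀ k : ℕ, min q ((⌈(ρ ω : ℝ≥0) * 2 ^ k⌉₊ : ℝ≥0) / 2 ^ k)
        ≤ ρ ω + ((2 : ℝ≥0) ^ k)⁻¹ := by
      intro k
      refine (min_le_right _ _).trans ?_
      rw [div_le_iff₀ (pos_iff_ne_zero.2 (h2k k))]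
      calc (⌈(ρ ω : ℝ≥0) * 2 ^ k⌉₊ : ℝ≥0) ≤ (ρ ω : ℝ≥0) * 2 ^ k + 1 :=
            (Nat.ceil_lt_add_one zero_le).le
        _ = (ρ ω + ((2 : ℝ≥0) ^ k)⁻¹) * 2 ^ k := by
            rw [add_mul, inv_mul_cancel₀ (h2k k)]
    have htb : Tendsto (fun k : ℕ => min q ((⌈(ρ ω : ℝ≥0) * 2 ^ k⌉₊ : ℝ≥0) / 2 ^ k))
        atTop (𝓝 (ρ ω)) := by
      have h0 : Tendsto (fun k : ℕ => ρ ω + ((2 : ℝ≥0) ^ k)⁻¹) atTop (𝓝 (ρ ω + 0)) := by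
        apply Tendsto.const_add
        have heq : (fun k : ℕ => ((2 : ℝ≥0) ^ k)⁻¹) = fun k : ℕ => ((2 : ℝ≥0)⁻¹) ^ k := by
          funext k; rw [inv_pow]
        rw [heq]
        exact NNReal.tendsto_pow_atTop_nhds_zero_of_lt_one (inv_lt_one_of_one_lt₀ one_lt_two)
      rw [add_zero] at h0
      exact tendsto_of_tendsto_of_tendsto_of_le_of_le tendsto_const_nhds h0 hb1 hb2
    exact ((hrc ω (ρ ω)).tendsto).comp
      (tendsto_nhdsWithin_of_tendsto_nhds_of_eventually_within _ htb
        (Filter.Eventually.of_forall hb1))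
  exact measurable_of_tendsto_metrizable' atTop hAm (tendsto_pi_nhds.2 hlim)

end FreshAlpha

section WealthMeas

open Filter Topology

variable {F : Filtration ℝ≥0 m0} {d : ℕ}

lemma trunc_le (a : ℝ≥0∞) (q : ℝ≥0) : (min a ((q : ℝ≥0) : ℝ≥0∞)).toNNReal ≤ q := by
  have h := ENNReal.toNNReal_mono ENNReal.coe_ne_top (min_le_right a ((q : ℝ≥0) : ℝ≥0∞))
  rwa [ENNReal.toNNReal_coe] at h

lemma wealth_measurable (S : ℝ≥0 → Ω → Fin d → ℝ)
    (hadapted : ∀ t : ℝ≥0, StronglyMeasurable[F t] (S t))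
    (hrc : ∀ ω (t : ℝ≥0), ContinuousWithinAt (fun s => S s ω) (Ici t) t)
    (x : ℝ) (H : SimpleStrategy F d) (q : ℝ≥0) :
    Measurable[plusFilt F q] fun ω => wealth S x H q ω := by
  classical
  have hSm : ∀ v : ℝ≥0, v ≤ q → Measurable[plusFilt F q] (S v) := fun v hv =>
    ((hadapted v).measurable).mono (F_le_plusFilt F hv) le_rfl
  have hlt : ∀ i : ℕ, MeasurableSet[plusFilt F q] {ω | H.τ i ω < ((q : ℝ≥0) : ℝ≥0∞)} := by
    intro i
    have hset : {ω | H.τ i ω < ((q : ℝ≥0) : ℝ≥0∞)} =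
        ⋃ (p : ℚ) (_ : Real.toNNReal p < q),
          {ω | H.τ i ω ≤ (Real.toNNReal p : ℝ≥0∞)} := by
      ext ω
      simp only [mem_iUnion, mem_setOf_eq]
      constructor
      · intro h
        obtain ⟨p, hp1, hp2⟩ := exists_rat_btwn_ennreal h ENNReal.coe_ne_top
        exact ⟨p, by exact_mod_cast hp2, hp1.le⟩
      · rintro ⟨p, hp, h1⟩
        exact lt_of_le_of_lt h1 (ENNReal.coe_lt_coe.2 hp)
    rw [hset]
    exact MeasurableSet.iUnion fun p => MeasurableSet.iUnion fun hp =>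
      (plusFilt_mono F hp.le) _ (H.tau_stop i (Real.toNNReal p))
  have hgm : ∀ i : ℕ, Measurable[plusFilt F q]
      (fun ω => if H.τ i ω < ((q : ℝ≥0) : ℝ≥0∞) then H.h i ω else 0) := by
    intro i
    intro B hB
    have hUm : MeasurableSet[plusFilt F q]
        ({ω | H.h i ω ∈ B} ∩ {ω | H.τ i ω < ((q : ℝ≥0) : ℝ≥0∞)}) := by
      have hU : ({ω | H.h i ω ∈ B} ∩ {ω | H.τ i ω < ((q : ℝ≥0) : ℝ≥0∞)}) =
          ⋃ (p : ℚ) (_ : Real.toNNReal p < q),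
            ({ω | H.h i ω ∈ B} ∩ {ω | H.τ i ω ≤ (Real.toNNReal p : ℝ≥0∞)}) := by
        ext ω
        simp only [mem_inter_iff, mem_iUnion, mem_setOf_eq]
        constructor
        · rintro ⟨h1, h2⟩
          obtain ⟨p, hp1, hp2⟩ := exists_rat_btwn_ennreal h2 ENNReal.coe_ne_top
          exact ⟨p, by exact_mod_cast hp2, h1, hp1.le⟩
        · rintro ⟨p, hp, h1, h2⟩
          exact ⟨h1, lt_of_le_of_lt h2 (ENNReal.coe_lt_coe.2 hp)⟩
      rw [hU]
      exact MeasurableSet.iUnion fun p => MeasurableSet.iUnion fun hp =>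
        (plusFilt_mono F hp.le) _ (H.h_meas i B hB (Real.toNNReal p))
    have hpre : (fun ω => if H.τ i ω < ((q : ℝ≥0) : ℝ≥0∞) then H.h i ω else 0) ⁻¹' B =
        ({ω | H.h i ω ∈ B} ∩ {ω | H.τ i ω < ((q : ℝ≥0) : ℝ≥0∞)}) ∪
        ({ω | H.τ i ω < ((q : ℝ≥0) : ℝ≥0∞)}ᶜ ∩
          (if (0 : Fin d → ℝ) ∈ B then (univ : Set Ω) else ∅)) := by
      ext ω
      by_cases hc : H.τ i ω < ((q : ℝ≥0) : ℝ≥0∞) <;>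
        by_cases h0 : (0 : Fin d → ℝ) ∈ B <;>
          simp [hc, h0]
    rw [hpre]
    refine hUm.union ((hlt i).compl.inter ?_)
    by_cases h0 : (0 : Fin d → ℝ) ∈ B <;> simp [h0]
  have hρm : ∀ i : ℕ, Measurable[plusFilt F q]
      (fun ω => (min (H.τ i ω) ((q : ℝ≥0) : ℝ≥0∞)).toNNReal) := fun i =>
    measurable_trunc_min (G := plusFilt F q) q
      (fun c hc => (plusFilt_mono F hc.le) _ (H.tau_stop i c))
  have hSρ : ∀ i : ℕ, Measurable[plusFilt F q]
      (fun ω => S ((min (H.τ i ω) ((q : ℝ≥0) : ℝ≥0∞)).toNNReal) ω) := fun i =>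
    measurable_comp_stopped (G := plusFilt F q) S hrc q hSm (hρm i)
      (fun ω => trunc_le _ q)
  have hrw : (fun ω => wealth S x H q ω) = fun ω =>
      x + ∑ i ∈ Finset.range H.n, ∑ j : Fin d,
        (if H.τ i ω < ((q : ℝ≥0) : ℝ≥0∞) then H.h i ω else 0) j *
          (S ((min (H.τ (i + 1) ω) ((q : ℝ≥0) : ℝ≥0∞)).toNNReal) ω j -
            S ((min (H.τ i ω) ((q : ℝ≥0) : ℝ≥0∞)).toNNReal) ω j) := by
    funext ω
    rw [wealth]
    congr 1
    apply Finset.sum_congr rfl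
    intro i _
    by_cases hc : H.τ i ω < ((q : ℝ≥0) : ℝ≥0∞)
    · simp [hc]
    · have hq : ((q : ℝ≥0) : ℝ≥0∞) ≤ H.τ i ω := not_lt.1 hc
      have h1 : min (H.τ i ω) ((q : ℝ≥0) : ℝ≥0∞) = ((q : ℝ≥0) : ℝ≥0∞) := min_eq_right hq
      have h2 : min (H.τ (i + 1) ω) ((q : ℝ≥0) : ℝ≥0∞) = ((q : ℝ≥0) : ℝ≥0∞) :=
        min_eq_right (hq.trans (H.tau_mono ω (Nat.le_succ i)))
      simp [hc, h1, h2]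
  rw [hrw]
  apply Measurable.add measurable_const
  apply Finset.measurable_sum
  intro i _
  apply Finset.measurable_sum
  intro j _
  exact ((measurable_pi_apply j).comp (hgm i)).mul
    (((measurable_pi_apply j).comp (hSρ (i + 1))).sub
      ((measurable_pi_apply j).comp (hSρ i)))

end WealthMeas

/-- `NA₁(Ps)` holds if and only if `NA₁(P)` holds for every `P ∈ Ps`. -/
theorem NA1_family_iff_NA1_individual {d : ℕ} (F : Filtration ℝ≥0 m0)
    (S : ℝ≥0 → Ω → Fin d → ℝ) (Ps : Set (Measure Ω)) (hPs : Ps.Nonempty)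
    (hprob : ∀ P ∈ Ps, IsProbabilityMeasure P)
    (hadapted : ∀ t : ℝ≥0, StronglyMeasurable[F t] (S t))
    (hrightcont : ∀ ω, ∀ t : ℝ≥0, ContinuousWithinAt (fun s => S s ω) (Set.Ici t) t)
    (hcont : ∀ P ∈ Ps, ∀ᵐ ω ∂P, Continuous fun t : ℝ≥0 => S t ω) :
    NA1 F S Ps ↔ ∀ P ∈ Ps, NA1 F S {P} := by
  classical
  constructor
  · -- hard direction: stop the strategies when the wealth hits zero
    intro hNA P hP T f hfm hf0 hsup Q hQ
    rw [Set.mem_singleton_iff] at hQ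
    rw [hQ]
    -- a sequence of cheap superhedges under `P`
    have hchoice : ∀ n : ℕ, ∃ x : ℝ, 0 ≤ x ∧ x < 1 / (n + 1) ∧
        ∃ H : SimpleStrategy F d, Superhedges S {P} x H T f := fun n =>
      hsup (1 / (n + 1)) (by positivity)
    choose xx hx0 hxlt HH hHH using hchoice
    set X : ℕ → ℝ≥0 → Ω → ℝ := fun n t ω => wealth S (xx n) (HH n) t ω with hX
    have hXrc : ∀ n, ∀ ω (t : ℝ≥0), ContinuousWithinAt (fun s => X n s ω) (Set.Ici t) t :=
      fun n ω t => wealth_rightCont S hrightcont (xx n) (HH n) ω t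
    have hXm : ∀ n (q : ℝ≥0), Measurable[plusFilt F q] fun ω => X n q ω :=
      fun n q => wealth_measurable S hadapted hrightcont (xx n) (HH n) q
    set σ : ℕ → Ω → ℝ≥0∞ := fun n => hitTime (X n) with hσ
    have hσstop : ∀ n, IsStopTime (plusFilt F) (σ n) :=
      fun n => hitTime_isStopTime F (hXrc n) (hXm n)
    set κ : ℕ → Ω → ℝ≥0∞ := fun n ω => min (σ n ω) ((T : ℝ≥0) : ℝ≥0∞) with hκdef
    have hκstop : ∀ n, IsStopTime (plusFilt F) (κ n) := by
      intro n t
      have hset : {ω | κ n ω ≤ ((t : ℝ≥0) : ℝ≥0∞)} =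
          {ω | σ n ω ≤ ((t : ℝ≥0) : ℝ≥0∞)} ∪
            {ω | ((T : ℝ≥0) : ℝ≥0∞) ≤ ((t : ℝ≥0) : ℝ≥0∞)} := by
        ext ω; simp [hκdef, min_le_iff]
      rw [hset]
      refine (hσstop n t).union ?_
      by_cases hTt : ((T : ℝ≥0) : ℝ≥0∞) ≤ ((t : ℝ≥0) : ℝ≥0∞) <;> simp [hTt]
    set H' : ℕ → SimpleStrategy F d := fun n => stopStrat (HH n) (κ n) (hκstop n) with hH'
    set A : ℕ → Set Ω := fun n =>
      {ω | ((T : ℝ≥0) : ℝ≥0∞) ≤ σ n ω ∧ f ω ≤ X n T ω} with hA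
    set g : Ω → ℝ := (⋂ n, A n).indicator f with hg
    -- each `A n` has full `P`-measure
    have hAfull : ∀ n, P ((A n)ᶜ) = 0 := by
      intro n
      have h1 := (hHH n).1 P (Set.mem_singleton P)
      have h2 := (hHH n).2 P (Set.mem_singleton P)
      have hae : ∀ᵐ ω ∂P, ω ∈ A n := by
        filter_upwards [h1, h2] with ω hω1 hω2
        refine ⟨?_, hω2⟩
        have htop : σ n ω = ⊤ := hitTime_eq_top fun t => hω1 t
        rw [htop]; exact le_top
      exact ae_iff.1 hae
    -- the wealth of the stopped strategies is everywhere nonnegative on continuity paths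
    have hwnonneg : ∀ n (ω : Ω), Continuous (fun v : ℝ≥0 => S v ω) →
        ∀ t : ℝ≥0, 0 ≤ wealth S (xx n) (H' n) t ω := by
      intro n ω hSω t
      have hc : Continuous fun v : ℝ≥0 => wealth S (xx n) (HH n) v ω :=
        wealth_continuous S (xx n) (HH n) hSω
      rw [hH', wealth_stopStrat]
      apply wealth_nonneg_of_le_hit S (hx0 n) hc
      rw [ENNReal.coe_toNNReal (ne_top_of_le_ne_top ENNReal.coe_ne_top (min_le_right _ _))]
      exact le_trans (min_le_left _ _) (min_le_left _ _)
    -- measurability of `g` w.r.t. `F (T+1)`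
    have hTT1 : T < T + 1 := lt_add_one T
    have hAm : MeasurableSet[F (T + 1)] (⋂ n, A n) := by
      refine MeasurableSet.iInter fun n => ?_
      have hs1 : MeasurableSet[F (T + 1)] {ω | ((T : ℝ≥0) : ℝ≥0∞) ≤ σ n ω} := by
        have hset : {ω | ((T : ℝ≥0) : ℝ≥0∞) ≤ σ n ω} =
            {ω | σ n ω < ((T : ℝ≥0) : ℝ≥0∞)}ᶜ := by
          ext ω; simp [not_lt]
        rw [hset]
        refine MeasurableSet.compl ?_
        have hset2 : {ω | σ n ω < ((T : ℝ≥0) : ℝ≥0∞)} =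
            ⋃ (p : ℚ) (_ : (Real.toNNReal p : ℝ≥0∞) < ((T : ℝ≥0) : ℝ≥0∞)),
              {ω | X n (Real.toNNReal p) ω < 0} := by
          ext ω
          simp only [Set.mem_iUnion, Set.mem_setOf_eq, hσ]
          rw [hitTime_lt_iff (hXrc n)]
          simp only [exists_prop]
        rw [hset2]
        refine MeasurableSet.iUnion fun p => MeasurableSet.iUnion fun hp => ?_
        have hps : Real.toNNReal p < T + 1 := by
          have h1 : Real.toNNReal p < T := by exact_mod_cast hp
          exact lt_trans h1 hTT1
        exact (plusFilt_le F hps) _ ((hXm n (Real.toNNReal p)) measurableSet_Iio)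
      have hs2 : MeasurableSet[F (T + 1)] {ω | f ω ≤ X n T ω} := by
        have hfme : Measurable[F (T + 1)] f :=
          (hfm.measurable).mono (F.mono hTT1.le) le_rfl
        have hXme : Measurable[F (T + 1)] fun ω => X n T ω :=
          (hXm n T).mono (plusFilt_le F hTT1) le_rfl
        exact measurableSet_le hfme hXme
      have hset3 : A n = {ω | ((T : ℝ≥0) : ℝ≥0∞) ≤ σ n ω} ∩ {ω | f ω ≤ X n T ω} := rfl
      rw [hset3]
      exact hs1.inter hs2
    have hgmeas : StronglyMeasurable[F (T + 1)] g :=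
      (hfm.mono (F.mono hTT1.le)).indicator hAm
    have hg0 : ∀ ω, 0 ≤ g ω := fun ω => Set.indicator_nonneg (fun ω' _ => hf0 ω') ω
    -- `g` is superhedged at horizon `T+1` under all measures simultaneously
    have hsuper : ∀ ε : ℝ, 0 < ε → ∃ x : ℝ, 0 ≤ x ∧ x < ε ∧
        ∃ Hs : SimpleStrategy F d, Superhedges S Ps x Hs (T + 1) g := by
      intro ε hε
      obtain ⟨n, hn⟩ := exists_nat_one_div_lt hε
      refine ⟨xx n, hx0 n, lt_trans (hxlt n) hn, H' n, ?_, ?_⟩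
      · intro Q hQ
        filter_upwards [hcont Q hQ] with ω hSω
        intro t
        exact hwnonneg n ω hSω t
      · intro Q hQ
        filter_upwards [hcont Q hQ] with ω hSω
        by_cases hmemA : ω ∈ ⋂ m, A m
        · have hAn : ω ∈ A n := Set.mem_iInter.1 hmemA n
          rw [hg, Set.indicator_of_mem hmemA]
          have hκT : κ n ω = ((T : ℝ≥0) : ℝ≥0∞) := min_eq_right hAn.1
          rw [hH', wealth_stopStrat, hκT]
          have harg : (min ((T : ℝ≥0) : ℝ≥0∞) (((T + 1 : ℝ≥0)) : ℝ≥0∞)).toNNReal = T := by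
            rw [min_eq_left (ENNReal.coe_le_coe.2 hTT1.le), ENNReal.toNNReal_coe]
          rw [harg]
          exact hAn.2
        · rw [hg, Set.indicator_of_notMem hmemA]
          exact hwnonneg n ω hSω (T + 1)
    have hgnull : P {ω | g ω ≠ 0} = 0 := hNA (T + 1) g hgmeas hg0 hsuper P hP
    have hsub : {ω | f ω ≠ 0} ⊆ {ω | g ω ≠ 0} ∪ ⋃ n, (A n)ᶜ := by
      intro ω hω
      by_cases hmemA : ω ∈ ⋂ m, A m
      · left
        show g ω ≠ 0
        rw [hg, Set.indicator_of_mem hmemA]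
        exact hω
      · right
        rw [Set.mem_iUnion]
        rw [Set.mem_iInter] at hmemA
        push_neg at hmemA
        obtain ⟨m, hm⟩ := hmemA
        exact ⟨m, hm⟩
    exact measure_mono_null hsub (measure_union_null hgnull (measure_iUnion_null hAfull))
  · -- easy direction
    intro h T f hfm hf0 hsup P hP
    refine h P hP T f hfm hf0 ?_ P (Set.mem_singleton P)
    intro ε hε
    obtain ⟨x, hx0, hxε, Hs, hHs⟩ := hsup ε hε
    refine ⟨x, hx0, hxε, Hs, ?_, ?_⟩
    · intro Q hQ
      rw [Set.mem_singleton_iff] at hQ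
      rw [hQ]
      exact hHs.1 P hP
    · intro Q hQ
      rw [Set.mem_singleton_iff] at hQ
      rw [hQ]
      exact hHs.2 P hP
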